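/- arXiv:2211.13071 — 2 statements merged into one kernel-verified Lean document; each statement's English description precedes it below -/
import Mathlib

section
/- Let G be a groupoid, R a commutative associative ring, and α = (D_g, α_g)_{g∈G} a partial action of G on R such that D_g is s-unital for every g ∈ G and R = ⊕_{e∈G₀} D_e. Then ⊕_{e∈G₀} D_e δ_e is a maximal commutative subring of R ⋊_α G if, and only if, α has the intersection property. -/
open scoped Classical

/-- A (discrete) groupoid, presented as its set of morphisms `G`, with source map `s`,
range map `r`, inversion `inv` and a partially defined multiplication `mul`.
The units (identity morphisms, i.e. the objects) are the elements `e` with `r e = e`. -/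
structure DGroupoid (G : Type*) where
  s : G → G
  r : G → G
  inv : G → G
  mul : (g h : G) → s g = r h → G
  s_inv : ∀ g, s (inv g) = r g
  r_inv : ∀ g, r (inv g) = s g
  inv_inv : ∀ g, inv (inv g) = g
  r_mul : ∀ g h (p : s g = r h), r (mul g h p) = r g
  s_mul : ∀ g h (p : s g = r h), s (mul g h p) = s h
  r_idem : ∀ g, r (r g) = r g
  s_of_r : ∀ g, s (r g) = r g
  r_of_s : ∀ g, r (s g) = s g
  s_idem : ∀ g, s (s g) = s g
  assoc : ∀ g h k (p : s g = r h) (q : s h = r k) (pq : s (mul g h p) = r k)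
      (qp : s g = r (mul h k q)), mul (mul g h p) k pq = mul g (mul h k q) qp
  id_mul : ∀ g (p : s (r g) = r g), mul (r g) g p = g
  mul_id : ∀ g (p : s g = r (s g)), mul g (s g) p = g
  mul_inv : ∀ g (p : s g = r (inv g)), mul g (inv g) p = r g
  inv_mul : ∀ g (p : s (inv g) = r g), mul (inv g) g p = s g

namespace DGroupoid

/-- `e` is a unit (an object, identified with its identity morphism) of the groupoid. -/
def unit {G : Type*} (𝔾 : DGroupoid G) (e : G) : Prop := 𝔾.r e = e

variable {G : Type*} (𝔾 : DGroupoid G)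

lemma unit_s {e : G} (he : 𝔾.unit e) : 𝔾.s e = e := by
  have h := 𝔾.s_of_r e; rw [he] at h; exact h

lemma unit_rg (g : G) : 𝔾.unit (𝔾.r g) := 𝔾.r_idem g

lemma unit_sg (g : G) : 𝔾.unit (𝔾.s g) := 𝔾.r_of_s g

lemma mul_eq_of {g g' h h' : G} (hg : g = g') (hh : h = h') (p : 𝔾.s g = 𝔾.r h)
    (p' : 𝔾.s g' = 𝔾.r h') : 𝔾.mul g h p = 𝔾.mul g' h' p' := by
  subst hg; subst hh; rfl

lemma mul_unit_left {e h : G} (he : 𝔾.unit e) (p : 𝔾.s e = 𝔾.r h) : 𝔾.mul e h p = h := by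
  have h1 : e = 𝔾.r h := by rw [← 𝔾.unit_s he]; exact p
  have p' : 𝔾.s (𝔾.r h) = 𝔾.r h := 𝔾.s_of_r h
  rw [𝔾.mul_eq_of h1 rfl p p']
  exact 𝔾.id_mul h p'

lemma mul_unit_right {g e : G} (he : 𝔾.unit e) (p : 𝔾.s g = 𝔾.r e) : 𝔾.mul g e p = g := by
  have h1 : e = 𝔾.s g := by rw [p, he]
  have p' : 𝔾.s g = 𝔾.r (𝔾.s g) := (𝔾.r_of_s g).symm
  rw [𝔾.mul_eq_of rfl h1 p p']
  exact 𝔾.mul_id g p'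

lemma unit_inv {e : G} (he : 𝔾.unit e) : 𝔾.inv e = e := by
  have h1 : 𝔾.r (𝔾.inv e) = e := by rw [𝔾.r_inv, 𝔾.unit_s he]
  have p2 : 𝔾.s e = 𝔾.r (𝔾.inv e) := by rw [h1, 𝔾.unit_s he]
  have h3 := 𝔾.mul_inv e p2
  have h2 : 𝔾.mul e (𝔾.inv e) p2 = 𝔾.inv e := by
    have p3 : 𝔾.s (𝔾.r (𝔾.inv e)) = 𝔾.r (𝔾.inv e) := 𝔾.s_of_r _
    rw [𝔾.mul_eq_of h1.symm rfl p2 p3]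
    exact 𝔾.id_mul (𝔾.inv e) p3
  rw [h2] at h3; rw [h3, he]

/-- `(g h) h⁻¹ = g`. -/
lemma mul_mul_inv (g h : G) (p : 𝔾.s g = 𝔾.r h) (pq : 𝔾.s (𝔾.mul g h p) = 𝔾.r (𝔾.inv h)) :
    𝔾.mul (𝔾.mul g h p) (𝔾.inv h) pq = g := by
  have q : 𝔾.s h = 𝔾.r (𝔾.inv h) := (𝔾.r_inv h).symm
  have qp : 𝔾.s g = 𝔾.r (𝔾.mul h (𝔾.inv h) q) := by rw [𝔾.r_mul]; exact p
  rw [𝔾.assoc g h (𝔾.inv h) p q pq qp]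
  have h1 : 𝔾.mul h (𝔾.inv h) q = 𝔾.r h := 𝔾.mul_inv h q
  have p2 : 𝔾.s g = 𝔾.r (𝔾.r h) := by rw [𝔾.r_idem]; exact p
  rw [𝔾.mul_eq_of rfl h1 qp p2]
  exact 𝔾.mul_unit_right (𝔾.unit_rg h) p2

/-- `(h g⁻¹) g = h`. -/
lemma mul_inv_mul (g h : G) (p : 𝔾.s h = 𝔾.r (𝔾.inv g))
    (q : 𝔾.s (𝔾.mul h (𝔾.inv g) p) = 𝔾.r g) :
    𝔾.mul (𝔾.mul h (𝔾.inv g) p) g q = h := by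
  have q' : 𝔾.s (𝔾.inv g) = 𝔾.r g := 𝔾.s_inv g
  have qp : 𝔾.s h = 𝔾.r (𝔾.mul (𝔾.inv g) g q') := by rw [𝔾.r_mul, ← p]
  rw [𝔾.assoc h (𝔾.inv g) g p q' q qp]
  have h1 : 𝔾.mul (𝔾.inv g) g q' = 𝔾.s g := 𝔾.inv_mul g q'
  have p2 : 𝔾.s h = 𝔾.r (𝔾.s g) := by rw [𝔾.r_of_s, ← 𝔾.r_inv g]; exact p
  rw [𝔾.mul_eq_of rfl h1 qp p2]
  exact 𝔾.mul_unit_right (𝔾.unit_sg g) p2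

/-- if `h g⁻¹ = r g` then `h = g`. -/
lemma eq_of_mul_inv_eq_r {g h : G} (p : 𝔾.s h = 𝔾.r (𝔾.inv g))
    (hh : 𝔾.mul h (𝔾.inv g) p = 𝔾.r g) : h = g := by
  have q : 𝔾.s (𝔾.mul h (𝔾.inv g) p) = 𝔾.r g := by rw [𝔾.s_mul, 𝔾.s_inv]
  have := 𝔾.mul_inv_mul g h p q
  rw [𝔾.mul_eq_of hh rfl q (by rw [𝔾.s_of_r])] at this
  rw [← this, 𝔾.id_mul]


end DGroupoid

section RingDefs

variable {R : Type*} [NonUnitalRing R]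

/-- A subset of a (possibly non-unital) ring is a two-sided ideal. -/
def IsRingIdeal (J : Set R) : Prop :=
  (0 : R) ∈ J ∧ (∀ x ∈ J, ∀ y ∈ J, x + y ∈ J) ∧ (∀ x ∈ J, -x ∈ J) ∧
    ∀ x ∈ J, ∀ y : R, x * y ∈ J ∧ y * x ∈ J

/-- A subset of a ring, viewed as a ring, is s-unital: every `x` in it lies in
`xT ∩ Tx`. -/
def IsSUnitalSet (J : Set R) : Prop :=
  ∀ x ∈ J, (∃ u ∈ J, x * u = x) ∧ (∃ v ∈ J, v * x = x)

end RingDefs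

/-- A partial action `α = (D_g, α_g)_{g ∈ G}` of a groupoid `𝔾` on a
(possibly non-unital, associative) ring `R`:  each `D_{r g}` is a two-sided ideal of `R`,
each `D_g` is a two-sided ideal of `D_{r g}`, and `α_g = act g` restricts to a ring
isomorphism `D_{g⁻¹} → D_g` (the function `act g` is arbitrary outside `D_{g⁻¹}`),
satisfying the axioms of a partial action. -/
structure PartialAction {G : Type*} (𝔾 : DGroupoid G) (R : Type*) [NonUnitalRing R] where
  D : G → Set R
  zero_mem : ∀ g, (0 : R) ∈ D g
  add_mem : ∀ g, ∀ x ∈ D g, ∀ y ∈ D g, x + y ∈ D g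
  neg_mem : ∀ g, ∀ x ∈ D g, -x ∈ D g
  subset_r : ∀ g, D g ⊆ D (𝔾.r g)
  idealR : ∀ g, IsRingIdeal (D (𝔾.r g))
  idealInR : ∀ g, ∀ x ∈ D g, ∀ y ∈ D (𝔾.r g), x * y ∈ D g ∧ y * x ∈ D g
  act : G → R → R
  act_mem : ∀ g, ∀ x ∈ D (𝔾.inv g), act g x ∈ D g
  act_add : ∀ g, ∀ x ∈ D (𝔾.inv g), ∀ y ∈ D (𝔾.inv g), act g (x + y) = act g x + act g y
  act_mul : ∀ g, ∀ x ∈ D (𝔾.inv g), ∀ y ∈ D (𝔾.inv g), act g (x * y) = act g x * act g y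
  act_inv : ∀ g, ∀ x ∈ D (𝔾.inv g), act (𝔾.inv g) (act g x) = x
  act_unit : ∀ e, 𝔾.unit e → ∀ x ∈ D e, act e x = x
  act_comp_mem : ∀ g h (p : 𝔾.s g = 𝔾.r h), ∀ x, x ∈ D (𝔾.inv g) → x ∈ D h →
      act (𝔾.inv h) x ∈ D (𝔾.inv (𝔾.mul g h p))
  act_comp : ∀ g h (p : 𝔾.s g = 𝔾.r h), ∀ x ∈ D (𝔾.inv h), act h x ∈ D (𝔾.inv g) →
      act g (act h x) = act (𝔾.mul g h p) x

namespace PartialAction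

variable {G : Type*} {R : Type*} [NonUnitalRing R] {𝔾 : DGroupoid G} (P : PartialAction 𝔾 R)

/-- `R = ⊕_{e ∈ G₀} D_e`: every element of `R` decomposes as a finite sum of elements
of the `D_e` (`e` a unit), and the decomposition is unique (a finite sum of elements of
the distinct `D_e`'s which vanishes has all terms zero). -/
def directSum : Prop :=
  (∀ x : R, ∃ f : G →₀ R, (∀ g ∈ f.support, 𝔾.unit g) ∧ (∀ g, f g ∈ P.D g) ∧
      (f.sum fun _ v => v) = x) ∧
    ∀ f : G →₀ R, (∀ g ∈ f.support, 𝔾.unit g) → (∀ g, f g ∈ P.D g) →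
      (f.sum fun _ v => v) = 0 → f = 0

/-- The carrier of the partial skew groupoid ring `R ⋊_α G`: finitely supported
functions `a : G →₀ R` (thought of as `Σ_g a_g δ_g`) with `a g ∈ D g`. -/
def carrier : Set (G →₀ R) := {a | ∀ g, a g ∈ P.D g}

/-- The multiplication of the partial skew groupoid ring:
`(a_g δ_g)(b_h δ_h) = α_g(α_{g⁻¹}(a_g) b_h) δ_{gh}` when `(g,h)` is composable,
and `0` otherwise. -/
noncomputable def skewMul (a b : G →₀ R) : G →₀ R :=
  a.support.sum fun g => b.support.sum fun h =>
    if p : 𝔾.s g = 𝔾.r h then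
      Finsupp.single (𝔾.mul g h p) (P.act g (P.act (𝔾.inv g) (a g) * b h))
    else 0

/-- The subset `⊕_{e ∈ G₀} D_e δ_e` of `R ⋊_α G`: elements supported on units. -/
def diag : Set (G →₀ R) := {a | (∀ g, a g ∈ P.D g) ∧ ∀ g ∈ a.support, 𝔾.unit g}

/-- `I` is a two-sided ideal of the partial skew groupoid ring `R ⋊_α G`. -/
def IsSkewIdeal (I : Set (G →₀ R)) : Prop :=
  I ⊆ P.carrier ∧ (0 : G →₀ R) ∈ I ∧ (∀ x ∈ I, ∀ y ∈ I, x + y ∈ I) ∧ (∀ x ∈ I, -x ∈ I) ∧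
    ∀ x ∈ I, ∀ y ∈ P.carrier, P.skewMul x y ∈ I ∧ P.skewMul y x ∈ I

/-- The projection `P₀ : R ⋊_α G → R`, `Σ_g a_g δ_g ↦ Σ_{e ∈ G₀} a_e`. -/
noncomputable def P0 (_P : PartialAction 𝔾 R) (a : G →₀ R) : R :=
  a.sum fun g v => if 𝔾.unit g then v else 0

/-- An ideal `I` of `R ⋊_α G` is `G`-graded if it is generated by its homogeneous
components, i.e. `I = ⊕_g (I ∩ D_g δ_g)`. -/
def IsGradedIdeal (I : Set (G →₀ R)) : Prop :=
  P.IsSkewIdeal I ∧ ∀ a ∈ I, ∀ g : G, Finsupp.single g (a g) ∈ I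

/-- `J` is a `G`-invariant (two-sided) ideal of `R`: `α_g(D_{g⁻¹} ∩ J) ⊆ J`. -/
def IsInvIdeal (J : Set R) : Prop :=
  IsRingIdeal J ∧ ∀ g, ∀ x ∈ P.D (𝔾.inv g) ∩ J, P.act g x ∈ J

/-- The subset `J ⋊_{α^J} G = ⊕_g (J ∩ D_g) δ_g` of `R ⋊_α G` attached to a
`G`-invariant ideal `J` of `R`. -/
def skewOf (J : Set R) : Set (G →₀ R) := {a | ∀ g, a g ∈ P.D g ∩ J}

/-- `⊕_{e ∈ G₀} D_e δ_e` is a maximal commutative subring of `R ⋊_α G`: it is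
commutative and coincides with its centralizer. -/
def IsMaxCommDiag : Prop :=
  (∀ a ∈ P.diag, ∀ b ∈ P.diag, P.skewMul a b = P.skewMul b a) ∧
    ∀ b ∈ P.carrier, (∀ a ∈ P.diag, P.skewMul a b = P.skewMul b a) → b ∈ P.diag

/-- The partial action has the intersection property: every nonzero ideal of
`R ⋊_α G` intersects `⊕_{e ∈ G₀} D_e δ_e` nontrivially. -/
def HasIntersectionProperty : Prop :=
  ∀ I : Set (G →₀ R), P.IsSkewIdeal I → I ≠ {0} → I ∩ P.diag ≠ {0}

/-- `R` is `G`-simple: the only `G`-invariant ideals of `R` are `{0}` and `R`. -/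
def GSimple : Prop := ∀ J : Set R, P.IsInvIdeal J → J = {0} ∨ J = Set.univ

/-- `R` is `G`-prime: if `I, J` are `G`-invariant ideals with `IJ = {0}`, then
`I = {0}` or `J = {0}`. -/
def GPrime : Prop :=
  ∀ I J : Set R, P.IsInvIdeal I → P.IsInvIdeal J →
    (∀ x ∈ I, ∀ y ∈ J, x * y = 0) → I = {0} ∨ J = {0}

/-- `R ⋊_α G` is graded simple. -/
def GradedSimple : Prop :=
  ∀ I : Set (G →₀ R), P.IsGradedIdeal I → I = {0} ∨ I = P.carrier

/-- `R ⋊_α G` is graded prime. -/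
def GradedPrime : Prop :=
  ∀ I J : Set (G →₀ R), P.IsGradedIdeal I → P.IsGradedIdeal J →
    (∀ x ∈ I, ∀ y ∈ J, P.skewMul x y = 0) → I = {0} ∨ J = {0}

/-- `R ⋊_α G` is a prime ring. -/
def SkewPrime : Prop :=
  ∀ I J : Set (G →₀ R), P.IsSkewIdeal I → P.IsSkewIdeal J →
    (∀ x ∈ I, ∀ y ∈ J, P.skewMul x y = 0) → I = {0} ∨ J = {0}

/-- `R ⋊_α G` is a simple ring. -/
def SkewSimple : Prop :=
  ∀ I : Set (G →₀ R), P.IsSkewIdeal I → I = {0} ∨ I = P.carrier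

end PartialAction

namespace PartialAction

variable {G R : Type*} [NonUnitalRing R] {𝔾 : DGroupoid G} (P : PartialAction 𝔾 R)

lemma act_zero (g : G) : P.act g 0 = 0 := by
  have h := P.act_add g 0 (P.zero_mem _) 0 (P.zero_mem _)
  rw [add_zero] at h
  exact left_eq_add.mp h

lemma memD_inv_inv {g : G} {x : R} (hx : x ∈ P.D g) : x ∈ P.D (𝔾.inv (𝔾.inv g)) := by
  rw [𝔾.inv_inv]; exact hx

lemma act_inv_mem {g : G} {x : R} (hx : x ∈ P.D g) : P.act (𝔾.inv g) x ∈ P.D (𝔾.inv g) :=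
  P.act_mem _ _ (P.memD_inv_inv hx)

lemma act_inv' {g : G} {x : R} (hx : x ∈ P.D g) : P.act g (P.act (𝔾.inv g) x) = x := by
  simpa [𝔾.inv_inv] using P.act_inv (𝔾.inv g) x (P.memD_inv_inv hx)

lemma memD_r {g : G} {x : R} (hx : x ∈ P.D g) : x ∈ P.D (𝔾.r g) := P.subset_r g hx

lemma memD_of_comp {g h : G} {b : R} (p : 𝔾.s g = 𝔾.r h) (hb : b ∈ P.D h) :
    b ∈ P.D (𝔾.r (𝔾.inv g)) := by
  rw [𝔾.r_inv, p]; exact P.memD_r hb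

/-- The coefficient appearing in the skew multiplication. -/
def coef (g : G) (a b : R) : R := P.act g (P.act (𝔾.inv g) a * b)

lemma coef_zero_left (g : G) (b : R) : P.coef g 0 b = 0 := by
  rw [coef, P.act_zero, zero_mul, P.act_zero]

lemma coef_zero_right (g : G) (a : R) : P.coef g a 0 = 0 := by
  rw [coef, mul_zero, P.act_zero]

lemma coef_add_left {g : G} {a a' b : R} (ha : a ∈ P.D g) (ha' : a' ∈ P.D g)
    (hb : b ∈ P.D (𝔾.r (𝔾.inv g))) :
    P.coef g (a + a') b = P.coef g a b + P.coef g a' b := by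
  rw [coef, coef, coef, P.act_add (𝔾.inv g) a (P.memD_inv_inv ha) a' (P.memD_inv_inv ha'),
    add_mul]
  exact P.act_add g _ (P.idealInR _ _ (P.act_inv_mem ha) _ hb).1 _
    (P.idealInR _ _ (P.act_inv_mem ha') _ hb).1

lemma coef_add_right {g : G} {a b b' : R} (ha : a ∈ P.D g)
    (hb : b ∈ P.D (𝔾.r (𝔾.inv g))) (hb' : b' ∈ P.D (𝔾.r (𝔾.inv g))) :
    P.coef g a (b + b') = P.coef g a b + P.coef g a b' := by
  rw [coef, coef, coef, mul_add]
  exact P.act_add g _ (P.idealInR _ _ (P.act_inv_mem ha) _ hb).1 _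
    (P.idealInR _ _ (P.act_inv_mem ha) _ hb').1

lemma skewMul_def' (a b : G →₀ R) :
    P.skewMul a b = ∑ g ∈ a.support, ∑ h ∈ b.support,
      if p : 𝔾.s g = 𝔾.r h then Finsupp.single (𝔾.mul g h p) (P.coef g (a g) (b h))
      else 0 := rfl

lemma skewMul_eq_sum {a b : G →₀ R} {X Y : Finset G} (hX : a.support ⊆ X)
    (hY : b.support ⊆ Y) :
    P.skewMul a b = ∑ g ∈ X, ∑ h ∈ Y,
      if p : 𝔾.s g = 𝔾.r h then Finsupp.single (𝔾.mul g h p) (P.coef g (a g) (b h))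
      else 0 := by
  rw [P.skewMul_def']
  have step1 : ∀ g : G, (∑ h ∈ b.support,
      if p : 𝔾.s g = 𝔾.r h then Finsupp.single (𝔾.mul g h p) (P.coef g (a g) (b h)) else 0)
      = ∑ h ∈ Y,
      if p : 𝔾.s g = 𝔾.r h then Finsupp.single (𝔾.mul g h p) (P.coef g (a g) (b h)) else 0 := by
    intro g
    refine Finset.sum_subset hY fun h _ hh => ?_
    rw [Finsupp.notMem_support_iff.mp hh]
    split
    · rw [P.coef_zero_right, Finsupp.single_zero]
    · rfl
  rw [Finset.sum_congr rfl fun g _ => step1 g]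
  refine Finset.sum_subset hX fun g _ hg => ?_
  refine Finset.sum_eq_zero fun h _ => ?_
  rw [Finsupp.notMem_support_iff.mp hg]
  split
  · rw [P.coef_zero_left, Finsupp.single_zero]
  · rfl

lemma skewMul_zero_left (b : G →₀ R) : P.skewMul 0 b = 0 := by
  rw [P.skewMul_def', Finsupp.support_zero, Finset.sum_empty]

lemma skewMul_zero_right (a : G →₀ R) : P.skewMul a 0 = 0 := by
  rw [P.skewMul_def']
  exact Finset.sum_eq_zero fun g _ => by rw [Finsupp.support_zero, Finset.sum_empty]

lemma carrier_zero : (0 : G →₀ R) ∈ P.carrier := fun g => by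
  simpa using P.zero_mem g

lemma carrier_add {a b : G →₀ R} (ha : a ∈ P.carrier) (hb : b ∈ P.carrier) :
    a + b ∈ P.carrier := fun g => by
  rw [Finsupp.add_apply]; exact P.add_mem g _ (ha g) _ (hb g)

lemma carrier_neg {a : G →₀ R} (ha : a ∈ P.carrier) : -a ∈ P.carrier := fun g => by
  rw [Finsupp.neg_apply]; exact P.neg_mem g _ (ha g)

lemma carrier_sub {a b : G →₀ R} (ha : a ∈ P.carrier) (hb : b ∈ P.carrier) :
    a - b ∈ P.carrier := by
  rw [sub_eq_add_neg]; exact P.carrier_add ha (P.carrier_neg hb)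

lemma carrier_single {g : G} {a : R} (ha : a ∈ P.D g) :
    Finsupp.single g a ∈ P.carrier := fun g' => by
  rw [Finsupp.single_apply]
  split
  · next h => exact h ▸ ha
  · exact P.zero_mem g'

lemma carrier_sum {ι : Type*} {A : Finset ι} {f : ι → G →₀ R}
    (hf : ∀ i ∈ A, f i ∈ P.carrier) : (∑ i ∈ A, f i) ∈ P.carrier := by
  classical
  induction A using Finset.induction_on with
  | empty => simpa using P.carrier_zero
  | insert _ _ hx ih =>
    rw [Finset.sum_insert hx]
    exact P.carrier_add (hf _ (Finset.mem_insert_self _ _))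
      (ih fun i hi => hf i (Finset.mem_insert_of_mem hi))

end PartialAction
namespace PartialAction

variable {G R : Type*} [NonUnitalRing R] {𝔾 : DGroupoid G} (P : PartialAction 𝔾 R)

lemma skewMul_mem_carrier {a b : G →₀ R} (ha : a ∈ P.carrier) (hb : b ∈ P.carrier) :
    P.skewMul a b ∈ P.carrier := by
  rw [P.skewMul_def']
  refine P.carrier_sum fun g _ => P.carrier_sum fun h _ => ?_
  split
  · next p =>
    refine P.carrier_single ?_
    -- coef g (a g) (b h) ∈ D (mul g h p)
    have hm1 : P.act (𝔾.inv g) (a g) * b h ∈ P.D (𝔾.inv g) :=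
      (P.idealInR _ _ (P.act_inv_mem (ha g)) _ (P.memD_of_comp p (hb h))).1
    have hm2 : P.act (𝔾.inv g) (a g) * b h ∈ P.D h := by
      refine (P.idealInR h _ (hb h) _ ?_).2
      have := P.memD_r (P.act_inv_mem (ha g))
      rwa [𝔾.r_inv, p] at this
    have hn := P.act_comp_mem g h p _ hm1 hm2
    have key : P.coef g (a g) (b h)
        = P.act (𝔾.mul g h p) (P.act (𝔾.inv h) (P.act (𝔾.inv g) (a g) * b h)) := by
      rw [coef]
      have p' : 𝔾.s (𝔾.mul g h p) = 𝔾.r (𝔾.inv h) := by rw [𝔾.s_mul, 𝔾.r_inv]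
      have hx : P.act (𝔾.inv g) (a g) * b h ∈ P.D (𝔾.inv (𝔾.inv h)) := by
        rw [𝔾.inv_inv]; exact hm2
      have := P.act_comp (𝔾.mul g h p) (𝔾.inv h) p' _ hx (by
        have q : 𝔾.s (𝔾.mul g h p) = 𝔾.r (𝔾.inv h) := p'
        exact hn)
      rw [this]
      congr 1
      exact (𝔾.mul_mul_inv g h p p').symm
    rw [key]
    exact P.act_mem _ _ hn
  · exact P.carrier_zero

/-- The key membership/identity facts about `coef`. -/
lemma coef_spec {g h : G} (p : 𝔾.s g = 𝔾.r h) {a b : R} (ha : a ∈ P.D g) (hb : b ∈ P.D h) :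
    P.act (𝔾.inv g) a * b ∈ P.D (𝔾.inv g) ∧ P.act (𝔾.inv g) a * b ∈ P.D h ∧
    P.act (𝔾.inv h) (P.act (𝔾.inv g) a * b) ∈ P.D (𝔾.inv (𝔾.mul g h p)) ∧
    P.coef g a b = P.act (𝔾.mul g h p) (P.act (𝔾.inv h) (P.act (𝔾.inv g) a * b)) ∧
    P.coef g a b ∈ P.D (𝔾.mul g h p) ∧ P.coef g a b ∈ P.D g := by
  have hm1 : P.act (𝔾.inv g) a * b ∈ P.D (𝔾.inv g) :=
    (P.idealInR _ _ (P.act_inv_mem ha) _ (P.memD_of_comp p hb)).1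
  have hm2 : P.act (𝔾.inv g) a * b ∈ P.D h := by
    refine (P.idealInR h _ hb _ ?_).2
    have := P.memD_r (P.act_inv_mem ha)
    rwa [𝔾.r_inv, p] at this
  have hn := P.act_comp_mem g h p _ hm1 hm2
  have p' : 𝔾.s (𝔾.mul g h p) = 𝔾.r (𝔾.inv h) := by rw [𝔾.s_mul, 𝔾.r_inv]
  have hx : P.act (𝔾.inv g) a * b ∈ P.D (𝔾.inv (𝔾.inv h)) := by
    rw [𝔾.inv_inv]; exact hm2
  have key : P.coef g a b
      = P.act (𝔾.mul g h p) (P.act (𝔾.inv h) (P.act (𝔾.inv g) a * b)) := by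
    rw [coef]
    have := P.act_comp (𝔾.mul g h p) (𝔾.inv h) p' _ hx hn
    rw [this]
    congr 1
    exact (𝔾.mul_mul_inv g h p p').symm
  refine ⟨hm1, hm2, hn, key, ?_, ?_⟩
  · rw [key]; exact P.act_mem _ _ hn
  · rw [coef]; exact P.act_mem _ _ hm1

lemma skewMul_add_left {a a' b : G →₀ R} (ha : a ∈ P.carrier) (ha' : a' ∈ P.carrier)
    (hb : b ∈ P.carrier) :
    P.skewMul (a + a') b = P.skewMul a b + P.skewMul a' b := by
  classical
  rw [P.skewMul_eq_sum (X := a.support ∪ a'.support) (Y := b.support)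
      Finsupp.support_add (subset_refl _),
    P.skewMul_eq_sum (X := a.support ∪ a'.support) (Y := b.support)
      Finset.subset_union_left (subset_refl _),
    P.skewMul_eq_sum (X := a.support ∪ a'.support) (Y := b.support)
      Finset.subset_union_right (subset_refl _),
    ← Finset.sum_add_distrib]
  refine Finset.sum_congr rfl fun g _ => ?_
  rw [← Finset.sum_add_distrib]
  refine Finset.sum_congr rfl fun h _ => ?_
  split
  · next p =>
    rw [Finsupp.add_apply, P.coef_add_left (ha g) (ha' g) (P.memD_of_comp p (hb h)),
      Finsupp.single_add]
  · rw [add_zero]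

lemma skewMul_add_right {a b b' : G →₀ R} (ha : a ∈ P.carrier) (hb : b ∈ P.carrier)
    (hb' : b' ∈ P.carrier) :
    P.skewMul a (b + b') = P.skewMul a b + P.skewMul a b' := by
  classical
  rw [P.skewMul_eq_sum (X := a.support) (Y := b.support ∪ b'.support)
      (subset_refl _) Finsupp.support_add,
    P.skewMul_eq_sum (X := a.support) (Y := b.support ∪ b'.support)
      (subset_refl _) Finset.subset_union_left,
    P.skewMul_eq_sum (X := a.support) (Y := b.support ∪ b'.support)
      (subset_refl _) Finset.subset_union_right,
    ← Finset.sum_add_distrib]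
  refine Finset.sum_congr rfl fun g _ => ?_
  rw [← Finset.sum_add_distrib]
  refine Finset.sum_congr rfl fun h _ => ?_
  split
  · next p =>
    rw [Finsupp.add_apply, P.coef_add_right (ha g) (P.memD_of_comp p (hb h))
      (P.memD_of_comp p (hb' h)), Finsupp.single_add]
  · rw [add_zero]

lemma skewMul_neg_left {a b : G →₀ R} (ha : a ∈ P.carrier) (hb : b ∈ P.carrier) :
    P.skewMul (-a) b = -P.skewMul a b := by
  have h := P.skewMul_add_left ha (P.carrier_neg ha) hb
  rw [add_neg_cancel, P.skewMul_zero_left] at h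
  exact (neg_eq_of_add_eq_zero_right h.symm).symm

lemma skewMul_neg_right {a b : G →₀ R} (ha : a ∈ P.carrier) (hb : b ∈ P.carrier) :
    P.skewMul a (-b) = -P.skewMul a b := by
  have h := P.skewMul_add_right ha hb (P.carrier_neg hb)
  rw [add_neg_cancel, P.skewMul_zero_right] at h
  exact (neg_eq_of_add_eq_zero_right h.symm).symm

lemma skewMul_sub_left {a a' b : G →₀ R} (ha : a ∈ P.carrier) (ha' : a' ∈ P.carrier)
    (hb : b ∈ P.carrier) :
    P.skewMul (a - a') b = P.skewMul a b - P.skewMul a' b := by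
  rw [sub_eq_add_neg, P.skewMul_add_left ha (P.carrier_neg ha') hb,
    P.skewMul_neg_left ha' hb, sub_eq_add_neg]

lemma skewMul_sub_right {a b b' : G →₀ R} (ha : a ∈ P.carrier) (hb : b ∈ P.carrier)
    (hb' : b' ∈ P.carrier) :
    P.skewMul a (b - b') = P.skewMul a b - P.skewMul a b' := by
  rw [sub_eq_add_neg, P.skewMul_add_right ha hb (P.carrier_neg hb'),
    P.skewMul_neg_right ha hb', sub_eq_add_neg]

lemma skewMul_sum_left {ι : Type*} {A : Finset ι} {f : ι → G →₀ R} {b : G →₀ R}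
    (hf : ∀ i ∈ A, f i ∈ P.carrier) (hb : b ∈ P.carrier) :
    P.skewMul (∑ i ∈ A, f i) b = ∑ i ∈ A, P.skewMul (f i) b := by
  classical
  induction A using Finset.induction_on with
  | empty => simpa using P.skewMul_zero_left b
  | insert _ _ hx ih =>
    rw [Finset.sum_insert hx, Finset.sum_insert hx,
      P.skewMul_add_left (hf _ (Finset.mem_insert_self _ _))
        (P.carrier_sum fun i hi => hf i (Finset.mem_insert_of_mem hi)) hb,
      ih fun i hi => hf i (Finset.mem_insert_of_mem hi)]

lemma skewMul_sum_right {ι : Type*} {A : Finset ι} {f : ι → G →₀ R} {a : G →₀ R}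
    (ha : a ∈ P.carrier) (hf : ∀ i ∈ A, f i ∈ P.carrier) :
    P.skewMul a (∑ i ∈ A, f i) = ∑ i ∈ A, P.skewMul a (f i) := by
  classical
  induction A using Finset.induction_on with
  | empty => simpa using P.skewMul_zero_right a
  | insert _ _ hx ih =>
    rw [Finset.sum_insert hx, Finset.sum_insert hx,
      P.skewMul_add_right ha (hf _ (Finset.mem_insert_self _ _))
        (P.carrier_sum fun i hi => hf i (Finset.mem_insert_of_mem hi)),
      ih fun i hi => hf i (Finset.mem_insert_of_mem hi)]

lemma single_mul_single (g h : G) (a b : R) :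
    P.skewMul (Finsupp.single g a) (Finsupp.single h b)
      = if p : 𝔾.s g = 𝔾.r h then Finsupp.single (𝔾.mul g h p) (P.coef g a b) else 0 := by
  rw [P.skewMul_eq_sum (X := {g}) (Y := {h}) Finsupp.support_single_subset
    Finsupp.support_single_subset, Finset.sum_singleton, Finset.sum_singleton,
    Finsupp.single_eq_same, Finsupp.single_eq_same]

end PartialAction
lemma finsupp_eq_sum_single {G R : Type*} [NonUnitalRing R] (a : G →₀ R) :
    a = ∑ g ∈ a.support, Finsupp.single g (a g) := by
  conv_lhs => rw [← Finsupp.sum_single a]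
  rfl

namespace PartialAction

variable {G R : Type*} [NonUnitalRing R] {𝔾 : DGroupoid G} (P : PartialAction 𝔾 R)

lemma exists_common_left_unit (hsu : ∀ g, IsSUnitalSet (P.D g)) (h : G) {x y : R}
    (hx : x ∈ P.D h) (hy : y ∈ P.D h) :
    ∃ v ∈ P.D h, v * x = x ∧ v * y = y := by
  obtain ⟨a, haD, hax⟩ := (hsu h x hx).2
  have hay : a * y ∈ P.D h := (P.idealInR h _ haD _ (P.memD_r hy)).1
  have hy' : y - a * y ∈ P.D h := by
    rw [sub_eq_add_neg]
    exact P.add_mem h _ hy _ (P.neg_mem h _ hay)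
  obtain ⟨b, hbD, hby⟩ := (hsu h (y - a * y) hy').2
  refine ⟨a + b - b * a, ?_, ?_, ?_⟩
  · rw [sub_eq_add_neg]
    exact P.add_mem h _ (P.add_mem h _ haD _ hbD) _
      (P.neg_mem h _ (P.idealInR h _ hbD _ (P.memD_r haD)).1)
  · have e1 : (a + b - b * a) * x = a * x + (b * x - b * (a * x)) := by noncomm_ring
    rw [e1, hax]
    abel
  · have e1 : (a + b - b * a) * y = a * y + b * (y - a * y) := by noncomm_ring
    rw [e1, hby]
    abel

lemma coef_assoc (hsu : ∀ g, IsSUnitalSet (P.D g)) {g h k : G} (p : 𝔾.s g = 𝔾.r h)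
    (q : 𝔾.s h = 𝔾.r k) {a b c : R} (ha : a ∈ P.D g) (hb : b ∈ P.D h) (hc : c ∈ P.D k) :
    P.coef (𝔾.mul g h p) (P.coef g a b) c = P.coef g a (P.coef h b c) := by
  set A' := P.act (𝔾.inv g) a with hA'def
  set B' := P.act (𝔾.inv h) b with hB'def
  have hA' : A' ∈ P.D (𝔾.inv g) := P.act_inv_mem ha
  have hA'rh : A' ∈ P.D (𝔾.r h) := by
    have := P.memD_r hA'; rwa [𝔾.r_inv, p] at this
  have hB' : B' ∈ P.D (𝔾.inv h) := P.act_inv_mem hb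
  have hcrinvh : c ∈ P.D (𝔾.r (𝔾.inv h)) := P.memD_of_comp q hc
  have hB'c : B' * c ∈ P.D (𝔾.inv h) := (P.idealInR _ _ hB' _ hcrinvh).1
  set W := P.coef h b c with hWdef
  have hW : W ∈ P.D h := (P.coef_spec q hb hc).2.2.2.2.2
  obtain ⟨v, hv, hvb, hvW⟩ := P.exists_common_left_unit hsu h hb hW
  have hvr : v ∈ P.D (𝔾.r (𝔾.inv g)) := by
    rw [𝔾.r_inv, p]; exact P.memD_r hv
  have hA'v : A' * v ∈ P.D (𝔾.inv g) := (P.idealInR _ _ hA' _ hvr).1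
  have hA'vh : A' * v ∈ P.D h := (P.idealInR h _ hv _ hA'rh).2
  set Y := P.act (𝔾.inv h) (A' * v) with hYdef
  have hY : Y ∈ P.D (𝔾.inv h) := P.act_inv_mem hA'vh
  have hm : A' * b = (A' * v) * b := by rw [mul_assoc, hvb]
  obtain ⟨-, -, hn1, key1, -, -⟩ := P.coef_spec p ha hb
  -- LHS
  have hsplit : P.act (𝔾.inv h) (A' * v * b) = Y * B' :=
    P.act_mul (𝔾.inv h) _ (P.memD_inv_inv hA'vh) _ (P.memD_inv_inv hb)
  have lhs1 : P.coef (𝔾.mul g h p) (P.coef g a b) c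
      = P.act (𝔾.mul g h p) (P.act (𝔾.inv h) (A' * b) * c) := by
    rw [coef]
    congr 2
    rw [key1]
    exact P.act_inv (𝔾.mul g h p) _ hn1
  have lhs2 : P.coef (𝔾.mul g h p) (P.coef g a b) c
      = P.act (𝔾.mul g h p) (Y * (B' * c)) := by
    rw [lhs1, hm, hsplit, mul_assoc]
  -- RHS
  have hactY : P.act h Y = A' * v := P.act_inv' hA'vh
  set Z := Y * (B' * c) with hZdef
  have hZ : Z ∈ P.D (𝔾.inv h) := (P.idealInR _ _ hY _ (P.memD_r hB'c)).1
  have hactZ : P.act h Z = (A' * v) * W := by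
    rw [hZdef, P.act_mul h _ hY _ hB'c, hactY]
    congr 1
  have hWr : W ∈ P.D (𝔾.r (𝔾.inv g)) := by
    rw [𝔾.r_inv, p]; exact P.memD_r hW
  have hactZmem : P.act h Z ∈ P.D (𝔾.inv g) := by
    rw [hactZ]; exact (P.idealInR _ _ hA'v _ hWr).1
  have rhs1 : P.coef g a W = P.act (𝔾.mul g h p) Z := by
    rw [coef, ← hA'def]
    have : A' * W = P.act h Z := by rw [hactZ, mul_assoc, hvW]
    rw [this]
    exact P.act_comp g h p Z hZ hactZmem
  rw [lhs2, rhs1]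

lemma skewMul_eq_double {a b : G →₀ R} (ha : a ∈ P.carrier) (hb : b ∈ P.carrier) :
    P.skewMul a b = ∑ g ∈ a.support, ∑ h ∈ b.support,
      P.skewMul (Finsupp.single g (a g)) (Finsupp.single h (b h)) := by
  calc P.skewMul a b
      = P.skewMul (∑ g ∈ a.support, Finsupp.single g (a g)) b := by
        rw [← finsupp_eq_sum_single]
    _ = ∑ g ∈ a.support, P.skewMul (Finsupp.single g (a g)) b :=
        P.skewMul_sum_left (fun g _ => P.carrier_single (ha g)) hb
    _ = _ := by
        refine Finset.sum_congr rfl fun g _ => ?_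
        calc P.skewMul (Finsupp.single g (a g)) b
            = P.skewMul (Finsupp.single g (a g)) (∑ h ∈ b.support, Finsupp.single h (b h)) := by
              rw [← finsupp_eq_sum_single]
          _ = _ := P.skewMul_sum_right (P.carrier_single (ha g))
                (fun h _ => P.carrier_single (hb h))

lemma single_assoc (hsu : ∀ g, IsSUnitalSet (P.D g)) (g h k : G) {a b c : R}
    (ha : a ∈ P.D g) (hb : b ∈ P.D h) (hc : c ∈ P.D k) :
    P.skewMul (P.skewMul (Finsupp.single g a) (Finsupp.single h b)) (Finsupp.single k c)
      = P.skewMul (Finsupp.single g a)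
          (P.skewMul (Finsupp.single h b) (Finsupp.single k c)) := by
  rw [P.single_mul_single g h a b, P.single_mul_single h k b c]
  by_cases p : 𝔾.s g = 𝔾.r h
  · rw [dif_pos p]
    by_cases q : 𝔾.s h = 𝔾.r k
    · rw [dif_pos q, P.single_mul_single, P.single_mul_single]
      have pq : 𝔾.s (𝔾.mul g h p) = 𝔾.r k := by rw [𝔾.s_mul]; exact q
      have qp : 𝔾.s g = 𝔾.r (𝔾.mul h k q) := by rw [𝔾.r_mul]; exact p
      rw [dif_pos pq, dif_pos qp, 𝔾.assoc g h k p q pq qp]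
      congr 1
      exact P.coef_assoc hsu p q ha hb hc
    · rw [dif_neg q, P.skewMul_zero_right, P.single_mul_single]
      have hnot : ¬ (𝔾.s (𝔾.mul g h p) = 𝔾.r k) := by rw [𝔾.s_mul]; exact q
      rw [dif_neg hnot]
  · rw [dif_neg p, P.skewMul_zero_left]
    by_cases q : 𝔾.s h = 𝔾.r k
    · rw [dif_pos q, P.single_mul_single]
      have hnot : ¬ (𝔾.s g = 𝔾.r (𝔾.mul h k q)) := by rw [𝔾.r_mul]; exact p
      rw [dif_neg hnot]
    · rw [dif_neg q, P.skewMul_zero_right]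

lemma skewMul_assoc (hsu : ∀ g, IsSUnitalSet (P.D g)) {a b c : G →₀ R}
    (ha : a ∈ P.carrier) (hb : b ∈ P.carrier) (hc : c ∈ P.carrier) :
    P.skewMul (P.skewMul a b) c = P.skewMul a (P.skewMul b c) := by
  have hsingle : ∀ g h : G, P.skewMul (Finsupp.single g (a g)) (Finsupp.single h (b h))
      ∈ P.carrier := fun g h =>
    P.skewMul_mem_carrier (P.carrier_single (ha g)) (P.carrier_single (hb h))
  have hsingle' : ∀ h k : G, P.skewMul (Finsupp.single h (b h)) (Finsupp.single k (c k))
      ∈ P.carrier := fun h k =>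
    P.skewMul_mem_carrier (P.carrier_single (hb h)) (P.carrier_single (hc k))
  calc P.skewMul (P.skewMul a b) c
      = ∑ g ∈ a.support, ∑ h ∈ b.support,
          P.skewMul (P.skewMul (Finsupp.single g (a g)) (Finsupp.single h (b h))) c := by
        rw [P.skewMul_eq_double ha hb]
        rw [P.skewMul_sum_left (fun g _ => P.carrier_sum fun h _ => hsingle g h) hc]
        exact Finset.sum_congr rfl fun g _ =>
          P.skewMul_sum_left (fun h _ => hsingle g h) hc
    _ = ∑ g ∈ a.support, ∑ h ∈ b.support, ∑ k ∈ c.support,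
          P.skewMul (P.skewMul (Finsupp.single g (a g)) (Finsupp.single h (b h)))
            (Finsupp.single k (c k)) := by
        refine Finset.sum_congr rfl fun g _ => Finset.sum_congr rfl fun h _ => ?_
        conv_lhs => rw [finsupp_eq_sum_single c]
        exact P.skewMul_sum_right (hsingle g h) (fun k _ => P.carrier_single (hc k))
    _ = ∑ g ∈ a.support, ∑ h ∈ b.support, ∑ k ∈ c.support,
          P.skewMul (Finsupp.single g (a g))
            (P.skewMul (Finsupp.single h (b h)) (Finsupp.single k (c k))) := by
        refine Finset.sum_congr rfl fun g _ => Finset.sum_congr rfl fun h _ =>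
          Finset.sum_congr rfl fun k _ => ?_
        exact P.single_assoc hsu g h k (ha g) (hb h) (hc k)
    _ = ∑ g ∈ a.support, P.skewMul (Finsupp.single g (a g)) (P.skewMul b c) := by
        refine Finset.sum_congr rfl fun g _ => ?_
        rw [P.skewMul_eq_double hb hc]
        rw [P.skewMul_sum_right (P.carrier_single (ha g))
          (fun h _ => P.carrier_sum fun k _ => hsingle' h k)]
        exact (Finset.sum_congr rfl fun h _ =>
          P.skewMul_sum_right (P.carrier_single (ha g)) fun k _ => hsingle' h k).symm
    _ = P.skewMul a (P.skewMul b c) := by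
        rw [← P.skewMul_sum_left (fun g _ => P.carrier_single (ha g))
          (P.skewMul_mem_carrier hb hc), ← finsupp_eq_sum_single]

end PartialAction
namespace PartialAction

variable {G R : Type*} [NonUnitalRing R] {𝔾 : DGroupoid G} (P : PartialAction 𝔾 R)

lemma diag_subset_carrier {d : G →₀ R} (hd : d ∈ P.diag) : d ∈ P.carrier := hd.1

lemma single_mem_diag {e : G} (he : 𝔾.unit e) {u : R} (hu : u ∈ P.D e) :
    Finsupp.single e u ∈ P.diag := by
  refine ⟨P.carrier_single hu, fun g hg => ?_⟩
  have := Finsupp.support_single_subset hg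
  simp only [Finset.mem_singleton] at this
  rwa [this]

lemma zero_mem_diag : (0 : G →₀ R) ∈ P.diag := by
  refine ⟨P.carrier_zero, fun g hg => ?_⟩
  simp at hg

lemma coef_unit {e : G} (he : 𝔾.unit e) {a b : R} (ha : a ∈ P.D e) (hb : b ∈ P.D e) :
    P.coef e a b = a * b := by
  have hDe : ∀ x ∈ P.D e, ∀ y : R, x * y ∈ P.D e ∧ y * x ∈ P.D e := by
    have h := P.idealR e
    rw [he] at h
    exact h.2.2.2
  rw [coef, 𝔾.unit_inv he, P.act_unit e he a ha, P.act_unit e he _ (hDe a ha b).1]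

lemma diag_mul_apply {d w : G →₀ R} (hd : d ∈ P.diag) (hw : w ∈ P.carrier) (g : G) :
    (P.skewMul d w) g = d (𝔾.r g) * w g := by
  classical
  rw [P.skewMul_def', Finsupp.finset_sum_apply]
  have hstep : ∀ f ∈ d.support, (∑ h ∈ w.support,
      if p : 𝔾.s f = 𝔾.r h then Finsupp.single (𝔾.mul f h p) (P.coef f (d f) (w h))
      else 0) g = (∑ h ∈ w.support,
      (if p : 𝔾.s f = 𝔾.r h then Finsupp.single (𝔾.mul f h p) (P.coef f (d f) (w h))
      else 0) g) := fun f _ => Finsupp.finset_sum_apply _ _ _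
  rw [Finset.sum_congr rfl hstep]
  rw [Finset.sum_eq_single (𝔾.r g) ?side1 ?side2]
  case side1 =>
    intro f hf hne
    refine Finset.sum_eq_zero fun h _ => ?_
    split
    · next p =>
      have hu : 𝔾.unit f := hd.2 f hf
      have hind : 𝔾.mul f h p = h := 𝔾.mul_unit_left hu p
      have hXg : 𝔾.mul f h p ≠ g := by
        intro hEq
        apply hne
        rw [hind] at hEq
        rw [← 𝔾.unit_s hu, p, hEq]
      exact Finsupp.single_eq_of_ne' hXg
    · rfl
  case side2 =>
    intro hf
    refine Finset.sum_eq_zero fun h _ => ?_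
    rw [Finsupp.notMem_support_iff.mp hf]
    split
    · rw [P.coef_zero_left, Finsupp.single_zero]; rfl
    · rfl
  -- now the sum over h at f = r g
  rw [Finset.sum_eq_single g ?side3 ?side4]
  case side3 =>
    intro h _ hne
    split
    · next p =>
      have hind : 𝔾.mul (𝔾.r g) h p = h := 𝔾.mul_unit_left (𝔾.unit_rg g) p
      refine Finsupp.single_eq_of_ne' ?_
      rw [hind]; exact hne
    · rfl
  case side4 =>
    intro hg
    rw [Finsupp.notMem_support_iff.mp hg]
    split
    · rw [P.coef_zero_right, Finsupp.single_zero]; rfl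
    · rfl
  · have p : 𝔾.s (𝔾.r g) = 𝔾.r g := 𝔾.s_of_r g
    rw [dif_pos p, 𝔾.id_mul g p, Finsupp.single_eq_same]
    exact P.coef_unit (𝔾.unit_rg g) (hd.1 (𝔾.r g)) (P.memD_r (hw g))

lemma mul_diag_apply {w d : G →₀ R} (hw : w ∈ P.carrier) (hd : d ∈ P.diag) (g : G) :
    (P.skewMul w d) g = P.act g (P.act (𝔾.inv g) (w g) * d (𝔾.s g)) := by
  classical
  rw [P.skewMul_def', Finsupp.finset_sum_apply]
  have hstep : ∀ f ∈ w.support, (∑ h ∈ d.support,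
      if p : 𝔾.s f = 𝔾.r h then Finsupp.single (𝔾.mul f h p) (P.coef f (w f) (d h))
      else 0) g = (∑ h ∈ d.support,
      (if p : 𝔾.s f = 𝔾.r h then Finsupp.single (𝔾.mul f h p) (P.coef f (w f) (d h))
      else 0) g) := fun f _ => Finsupp.finset_sum_apply _ _ _
  rw [Finset.sum_congr rfl hstep]
  rw [Finset.sum_eq_single g ?side1 ?side2]
  case side1 =>
    intro f _ hne
    refine Finset.sum_eq_zero fun h hh => ?_
    split
    · next p =>
      have hind : 𝔾.mul f h p = f := 𝔾.mul_unit_right (hd.2 h hh) p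
      refine Finsupp.single_eq_of_ne' ?_
      rw [hind]; exact hne
    · rfl
  case side2 =>
    intro hg
    refine Finset.sum_eq_zero fun h _ => ?_
    rw [Finsupp.notMem_support_iff.mp hg]
    split
    · rw [P.coef_zero_left, Finsupp.single_zero]; rfl
    · rfl
  -- sum over h ∈ d.support, f = g
  rw [Finset.sum_eq_single (𝔾.s g) ?side3 ?side4]
  case side3 =>
    intro h hh hne
    split
    · next p =>
      exfalso
      apply hne
      rw [← (hd.2 h hh), ← p]
    · rfl
  case side4 =>
    intro hs
    rw [Finsupp.notMem_support_iff.mp hs]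
    have p : 𝔾.s g = 𝔾.r (𝔾.s g) := (𝔾.r_of_s g).symm
    rw [dif_pos p, P.coef_zero_right, Finsupp.single_zero]
    rfl
  · have p : 𝔾.s g = 𝔾.r (𝔾.s g) := (𝔾.r_of_s g).symm
    rw [dif_pos p, 𝔾.mul_id g p, Finsupp.single_eq_same]
    rfl

/-- Multiplying on the right by a suitable `v δ_{g⁻¹}` moves the `g`-component of `z`
to the unit `r g`, without increasing the support. -/
lemma bump (hsu : ∀ g, IsSUnitalSet (P.D g)) {z : G →₀ R} (hz : z ∈ P.carrier) {g : G}
    (hg : g ∈ z.support) :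
    ∃ v ∈ P.D (𝔾.inv g), (P.skewMul z (Finsupp.single (𝔾.inv g) v)) (𝔾.r g) = z g ∧
      (P.skewMul z (Finsupp.single (𝔾.inv g) v)).support.card ≤ z.support.card := by
  classical
  obtain ⟨v, hv, hαv⟩ := (hsu (𝔾.inv g) _ (P.act_inv_mem (hz g))).1
  refine ⟨v, hv, ?_, ?_⟩
  · rw [P.skewMul_eq_sum (X := z.support) (Y := {𝔾.inv g}) (subset_refl _)
      Finsupp.support_single_subset]
    rw [Finset.sum_congr rfl (fun h _ => Finset.sum_singleton _ _), Finsupp.finset_sum_apply]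
    rw [Finset.sum_eq_single g ?s1 ?s2]
    case s1 =>
      intro h _ hne
      split
      · next p =>
        refine Finsupp.single_eq_of_ne' fun hEq => hne (𝔾.eq_of_mul_inv_eq_r p hEq)
      · rfl
    case s2 => intro h; exact absurd hg h
    · have p : 𝔾.s g = 𝔾.r (𝔾.inv g) := (𝔾.r_inv g).symm
      rw [dif_pos p, 𝔾.mul_inv g p, Finsupp.single_eq_same, Finsupp.single_eq_same, coef,
        hαv, P.act_inv' (hz g)]
  · rw [P.skewMul_eq_sum (X := z.support) (Y := {𝔾.inv g}) (subset_refl _)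
      Finsupp.support_single_subset]
    rw [Finset.sum_congr rfl (fun h _ => Finset.sum_singleton _ _)]
    refine le_trans (Finset.card_le_card ?_) (Finset.card_image_le
      (f := fun h => if p : 𝔾.s h = 𝔾.r (𝔾.inv g) then 𝔾.mul h (𝔾.inv g) p else h))
    refine subset_trans Finsupp.support_finset_sum ?_
    intro g' hg'
    rw [Finset.mem_biUnion] at hg'
    obtain ⟨h, hh, hg'2⟩ := hg'
    rw [Finset.mem_image]
    refine ⟨h, hh, ?_⟩
    revert hg'2
    split
    · next p =>
      intro hg'2
      have := Finsupp.support_single_subset hg'2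
      simp only [Finset.mem_singleton] at this
      rw [this]
    · intro hg'2
      simp at hg'2

end PartialAction
namespace PartialAction

variable {G R : Type*} [NonUnitalCommRing R] {𝔾 : DGroupoid G} (P : PartialAction 𝔾 R)

theorem maxComm_to_intersection (hsu : ∀ g, IsSUnitalSet (P.D g))
    (hmc : P.IsMaxCommDiag) : P.HasIntersectionProperty := by
  classical
  intro I hI hIne hcap
  obtain ⟨z, hzI, hzne⟩ : ∃ z ∈ I, z ≠ 0 := by
    by_contra h
    push_neg at h
    exact hIne (Set.eq_singleton_iff_unique_mem.mpr ⟨hI.2.1, fun w hw => h w hw⟩)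
  -- there exists an element of I with a nonzero coefficient at a unit
  have hW : ∃ n : ℕ, ∃ w, (w ∈ I ∧ ∃ e, 𝔾.unit e ∧ w e ≠ 0) ∧ w.support.card = n := by
    obtain ⟨g, hgz⟩ := Finsupp.support_nonempty_iff.mpr hzne
    obtain ⟨v, hv, heval, _⟩ := P.bump hsu (hI.1 hzI) hgz
    refine ⟨_, _, ⟨(hI.2.2.2.2 z hzI _ (P.carrier_single hv)).1, 𝔾.r g, 𝔾.unit_rg g, ?_⟩, rfl⟩
    rw [heval]
    exact Finsupp.mem_support_iff.mp hgz
  set n0 := Nat.find hW with hn0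
  obtain ⟨w, ⟨hwI, e0, he0, hwe0⟩, hwcard⟩ := Nat.find_spec hW
  have hwc : w ∈ P.carrier := hI.1 hwI
  by_cases hcent : ∀ d ∈ P.diag, P.skewMul d w = P.skewMul w d
  · have hwdiag : w ∈ P.diag := hmc.2 w hwc hcent
    have hmem : w ∈ I ∩ P.diag := ⟨hwI, hwdiag⟩
    rw [hcap] at hmem
    apply hwe0
    rw [Set.mem_singleton_iff.mp hmem]
    rfl
  · push_neg at hcent
    obtain ⟨d, hd, hne⟩ := hcent
    set y := P.skewMul d w - P.skewMul w d with hydef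
    have hyne : y ≠ 0 := sub_ne_zero.mpr hne
    have hyI : y ∈ I := by
      rw [hydef, sub_eq_add_neg]
      exact hI.2.2.1 _ (hI.2.2.2.2 w hwI d (P.diag_subset_carrier hd)).2 _
        (hI.2.2.2.1 _ (hI.2.2.2.2 w hwI d (P.diag_subset_carrier hd)).1)
    have hyval : ∀ g, y g = d (𝔾.r g) * w g
        - P.act g (P.act (𝔾.inv g) (w g) * d (𝔾.s g)) := fun g => by
      rw [hydef, Finsupp.sub_apply, P.diag_mul_apply hd hwc, P.mul_diag_apply hwc hd]
    have hysupp : ∀ g, w g = 0 → y g = 0 := fun g hg => by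
      rw [hyval g, hg, mul_zero, P.act_zero, zero_mul, P.act_zero, sub_zero]
    have hyunit : ∀ e', 𝔾.unit e' → y e' = 0 := fun e' he' => by
      have h1 : 𝔾.r e' = e' := he'
      have h2 : 𝔾.s e' = e' := 𝔾.unit_s he'
      rw [hyval e', h1, h2, 𝔾.unit_inv he', P.act_unit e' he' _ (hwc e'),
        P.act_unit e' he' _ ?memb, mul_comm, sub_self]
      case memb =>
        have hideal := P.idealR e'
        rw [h1] at hideal
        exact (hideal.2.2.2 _ (hwc e') _).1
    have hsub : y.support ⊆ w.support.erase e0 := by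
      intro g hg
      rw [Finset.mem_erase]
      refine ⟨fun hEq => Finsupp.mem_support_iff.mp hg (hEq ▸ hyunit e0 he0), ?_⟩
      rw [Finsupp.mem_support_iff]
      exact fun hwg => Finsupp.mem_support_iff.mp hg (hysupp g hwg)
    have hcardy : y.support.card ≤ n0 - 1 := by
      refine le_trans (Finset.card_le_card hsub) ?_
      rw [Finset.card_erase_of_mem (Finsupp.mem_support_iff.mpr hwe0), hwcard]
    obtain ⟨g2, hg2⟩ := Finsupp.support_nonempty_iff.mpr hyne
    obtain ⟨v2, hv2, heval2, hcard2⟩ := P.bump hsu (hI.1 hyI) hg2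
    have hn0pos : 1 ≤ n0 := by
      rw [hn0, ← hwcard]
      exact Finset.card_pos.mpr ⟨e0, Finsupp.mem_support_iff.mpr hwe0⟩
    have hlt : (P.skewMul y (Finsupp.single (𝔾.inv g2) v2)).support.card < n0 := by
      omega
    exact Nat.find_min hW hlt ⟨_, ⟨(hI.2.2.2.2 y hyI _ (P.carrier_single hv2)).1,
      𝔾.r g2, 𝔾.unit_rg g2, by rw [heval2]; exact Finsupp.mem_support_iff.mp hg2⟩, rfl⟩

end PartialAction
namespace PartialAction

variable {G R : Type*} [NonUnitalCommRing R] {𝔾 : DGroupoid G} (P : PartialAction 𝔾 R)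

theorem intersection_to_maxComm (hsu : ∀ g, IsSUnitalSet (P.D g))
    (hip : P.HasIntersectionProperty) : P.IsMaxCommDiag := by
  classical
  constructor
  · -- the diagonal is commutative
    intro a ha b hb
    ext g
    rw [P.diag_mul_apply ha (P.diag_subset_carrier hb) g,
      P.diag_mul_apply hb (P.diag_subset_carrier ha) g]
    by_cases hu : 𝔾.unit g
    · have hg : 𝔾.r g = g := hu
      rw [hg, mul_comm]
    · have hag : a g = 0 := Finsupp.notMem_support_iff.mp fun hmem => hu (ha.2 g hmem)
      have hbg : b g = 0 := Finsupp.notMem_support_iff.mp fun hmem => hu (hb.2 g hmem)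
      rw [hag, hbg, mul_zero, mul_zero]
  · -- maximal commutativity
    intro b hb hcomm
    refine ⟨hb, fun g₀ hg₀ => ?_⟩
    by_contra hng₀
    have hbg₀ : b g₀ ≠ 0 := Finsupp.mem_support_iff.mp hg₀
    set e := 𝔾.r g₀ with hedef
    have hue : 𝔾.unit e := 𝔾.unit_rg g₀
    have hre : b g₀ ∈ P.D e := P.memD_r (hb g₀)
    -- pointwise commutation relation
    have hpt : ∀ u ∈ P.D e, u * b g₀
        = P.act g₀ (P.act (𝔾.inv g₀) (b g₀) * (Finsupp.single e u) (𝔾.s g₀)) := by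
      intro u hu
      have h := hcomm (Finsupp.single e u) (P.single_mem_diag hue hu)
      have h2 := DFunLike.congr_fun h g₀
      rw [P.diag_mul_apply (P.single_mem_diag hue hu) hb g₀,
        P.mul_diag_apply hb (P.single_mem_diag hue hu) g₀, ← hedef,
        Finsupp.single_eq_same] at h2
      exact h2
    have hs0 : 𝔾.s g₀ = e := by
      by_contra hne'
      obtain ⟨v, hv, hvb⟩ := (hsu g₀ _ (hb g₀)).2
      have h := hpt v (P.memD_r hv)
      rw [Finsupp.single_eq_of_ne' (fun hh => hne' hh.symm), mul_zero, P.act_zero] at h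
      exact hbg₀ (by rw [← hvb, h])
    have star : ∀ u ∈ P.D e, u * b g₀ = P.act g₀ (P.act (𝔾.inv g₀) (b g₀) * u) := by
      intro u hu
      have h := hpt u hu
      rwa [hs0, Finsupp.single_eq_same] at h
    set r0 := b g₀ with hr0def
    set x : G →₀ R := Finsupp.single e r0 - Finsupp.single g₀ r0 with hxdef
    have hene : e ≠ g₀ := fun h => hng₀ (h ▸ hue)
    have hxg₀ : x g₀ = -r0 := by
      rw [hxdef, Finsupp.sub_apply, Finsupp.single_eq_of_ne' hene, Finsupp.single_eq_same,
        zero_sub]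
    have hxc : x ∈ P.carrier :=
      P.carrier_sub (P.carrier_single hre) (P.carrier_single (hb g₀))
    have hxne : x ≠ 0 := by
      intro h0
      apply hbg₀
      have := hxg₀
      rw [h0] at this
      simpa using this.symm
    -- the pairing relation
    set Rel : G → G → Prop := fun m n => ∃ (h : G) (k : G) (p1 : 𝔾.s h = 𝔾.r k) (p2 : 𝔾.s g₀ = 𝔾.r k)
        (p3 : 𝔾.s h = 𝔾.r (𝔾.mul g₀ k p2)), 𝔾.r k = e ∧ m = 𝔾.mul h k p1
          ∧ n = 𝔾.mul h (𝔾.mul g₀ k p2) p3 with hReldef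
    set Eqv : G → G → Prop := Relation.EqvGen Rel with hEqvdef
    have hRel_r : ∀ m n, Rel m n → 𝔾.r m = 𝔾.r n := by
      rintro m n ⟨h, k, p1, p2, p3, hk, rfl, rfl⟩
      rw [𝔾.r_mul, 𝔾.r_mul]
    have hEqv_r : ∀ m n, Eqv m n → 𝔾.r m = 𝔾.r n := by
      intro m n h
      induction h with
      | rel a b hab => exact hRel_r a b hab
      | refl a => rfl
      | symm a b _ ih => exact ih.symm
      | trans a b c _ _ ih1 ih2 => exact ih1.trans ih2
    have hEqv_unit : ∀ e1 e2, 𝔾.unit e1 → 𝔾.unit e2 → Eqv e1 e2 → e1 = e2 := by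
      intro e1 e2 h1 h2 h
      have := hEqv_r e1 e2 h
      rwa [h1, h2] at this
    -- the functionals F e'
    set F : G → (G →₀ R) → R := fun e' z => z.sum fun g v => if Eqv g e' then v else 0
      with hFdef
    have hF0 : ∀ e', F e' 0 = 0 := fun e' => Finsupp.sum_zero_index
    have hFadd : ∀ e' z z', F e' (z + z') = F e' z + F e' z' := fun e' z z' =>
      Finsupp.sum_add_index' (fun a => by split <;> rfl)
        (fun a b1 b2 => by split <;> simp)
    have hFneg : ∀ e' z, F e' (-z) = -F e' z := by
      intro e' z
      have h := hFadd e' (-z) z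
      rw [neg_add_cancel, hF0] at h
      exact eq_neg_of_add_eq_zero_left h.symm
    have hFsingle : ∀ e' m (w : R), F e' (Finsupp.single m w) = if Eqv m e' then w else 0 :=
      fun e' m w => Finsupp.sum_single_index (by split <;> rfl)
    have hFsub : ∀ e' z z', F e' (z - z') = F e' z - F e' z' := by
      intro e' z z'
      rw [sub_eq_add_neg, hFadd, hFneg, sub_eq_add_neg]
    have hFsum : ∀ e' (A : Finset G) (f : G → (G →₀ R)),
        F e' (∑ i ∈ A, f i) = ∑ i ∈ A, F e' (f i) := by
      intro e' A f
      induction A using Finset.induction_on with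
      | empty => simpa using hF0 e'
      | insert _ _ hx ih => rw [Finset.sum_insert hx, Finset.sum_insert hx, hFadd, ih]
    have hpair : ∀ e' m n (w : R), Rel m n
        → F e' (Finsupp.single m w - Finsupp.single n w) = 0 := by
      intro e' m n w hrel
      rw [hFsub, hFsingle, hFsingle]
      have hiff : Eqv m e' ↔ Eqv n e' := by
        constructor
        · intro h
          exact Relation.EqvGen.trans _ _ _ (Relation.EqvGen.symm _ _
            (Relation.EqvGen.rel m n hrel)) h
        · intro h
          exact Relation.EqvGen.trans _ _ _ (Relation.EqvGen.rel m n hrel) h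
      rw [if_congr hiff rfl rfl, sub_self]
    -- computation (A) : x · (b_k δ_k)
    have compA : ∀ k (bk : R), bk ∈ P.D k → 𝔾.r k = e →
        ∃ (p2 : 𝔾.s g₀ = 𝔾.r k), P.skewMul x (Finsupp.single k bk)
            = Finsupp.single k (r0 * bk) - Finsupp.single (𝔾.mul g₀ k p2) (r0 * bk)
          ∧ r0 * bk ∈ P.D k ∧ r0 * bk ∈ P.D (𝔾.mul g₀ k p2) := by
      intro k bk hbk hek
      have c2 : 𝔾.s g₀ = 𝔾.r k := by rw [hs0, hek]
      have c1 : 𝔾.s e = 𝔾.r k := by rw [𝔾.unit_s hue, hek]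
      have hbke : bk ∈ P.D e := by rw [← hek]; exact P.memD_r hbk
      have hcoef2 : P.coef g₀ r0 bk = r0 * bk := by
        rw [coef, ← star bk hbke, mul_comm]
      refine ⟨c2, ?_, ?_, ?_⟩
      · rw [hxdef, P.skewMul_sub_left (P.carrier_single hre)
          (P.carrier_single (hb g₀)) (P.carrier_single hbk),
          P.single_mul_single, P.single_mul_single, dif_pos c1, dif_pos c2,
          P.coef_unit hue hre hbke, 𝔾.mul_unit_left hue c1, hcoef2]
      · exact (P.idealInR k _ hbk _ (by rw [hek]; exact hre)).2
      · rw [← hcoef2]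
        exact (P.coef_spec c2 (hb g₀) hbk).2.2.2.2.1
    have compA0 : ∀ k (bk : R), bk ∈ P.D k → 𝔾.r k ≠ e →
        P.skewMul x (Finsupp.single k bk) = 0 := by
      intro k bk hbk hek
      have c1 : ¬ (𝔾.s e = 𝔾.r k) := by rw [𝔾.unit_s hue]; exact fun h => hek h.symm
      have c2 : ¬ (𝔾.s g₀ = 𝔾.r k) := by rw [hs0]; exact fun h => hek h.symm
      rw [hxdef, P.skewMul_sub_left (P.carrier_single hre)
        (P.carrier_single (hb g₀)) (P.carrier_single hbk),
        P.single_mul_single, P.single_mul_single, dif_neg c1, dif_neg c2, sub_self]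
    -- F vanishes on x
    have hFx : ∀ e', F e' x = 0 := by
      intro e'
      have hrel : Rel e g₀ := by
        have p1 : 𝔾.s e = 𝔾.r e := by rw [𝔾.unit_s hue, hue]
        have p2 : 𝔾.s g₀ = 𝔾.r e := by rw [hs0, hue]
        have p3 : 𝔾.s e = 𝔾.r (𝔾.mul g₀ e p2) := by rw [𝔾.r_mul, 𝔾.unit_s hue, hedef]
        exact ⟨e, e, p1, p2, p3, hue, (𝔾.mul_unit_left hue p1).symm,
          by rw [𝔾.mul_unit_left hue p3, 𝔾.mul_unit_right hue p2]⟩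
      exact hpair e' e g₀ r0 hrel
    -- F vanishes on (a_h δ_h) · x
    have hFsx1 : ∀ (h : G) (ah : R), ah ∈ P.D h → ∀ e',
        F e' (P.skewMul (Finsupp.single h ah) x) = 0 := by
      intro h ah hah e'
      have hrw : P.skewMul (Finsupp.single h ah) x
          = P.skewMul (Finsupp.single h ah) (Finsupp.single e r0)
            - P.skewMul (Finsupp.single h ah) (Finsupp.single g₀ r0) := by
        rw [hxdef]
        exact P.skewMul_sub_right (P.carrier_single hah) (P.carrier_single hre)
          (P.carrier_single (hb g₀))
      rw [hrw, P.single_mul_single, P.single_mul_single]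
      by_cases hse : 𝔾.s h = e
      · have c1 : 𝔾.s h = 𝔾.r e := by rw [hue]; exact hse
        have c2 : 𝔾.s h = 𝔾.r g₀ := by rw [← hedef]; exact hse
        rw [dif_pos c1, dif_pos c2]
        refine hpair e' _ _ _ ?_
        have p2 : 𝔾.s g₀ = 𝔾.r e := by rw [hs0, hue]
        have p3 : 𝔾.s h = 𝔾.r (𝔾.mul g₀ e p2) := by rw [𝔾.r_mul, ← hedef]; exact hse
        exact ⟨h, e, c1, p2, p3, hue, rfl,
          𝔾.mul_eq_of rfl (𝔾.mul_unit_right hue p2).symm c2 p3⟩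
      · have c1 : ¬ (𝔾.s h = 𝔾.r e) := by rw [hue]; exact hse
        have c2 : ¬ (𝔾.s h = 𝔾.r g₀) := by rw [← hedef]; exact hse
        rw [dif_neg c1, dif_neg c2, sub_self]
        exact hF0 e'
    -- F vanishes on x · (b_k δ_k)
    have hFxt1 : ∀ (k : G) (bk : R), bk ∈ P.D k → ∀ e',
        F e' (P.skewMul x (Finsupp.single k bk)) = 0 := by
      intro k bk hbk e'
      by_cases hek : 𝔾.r k = e
      · obtain ⟨p2, heq, hm1, hm2⟩ := compA k bk hbk hek
        rw [heq]
        refine hpair e' _ _ _ ?_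
        have p1 : 𝔾.s e = 𝔾.r k := by rw [𝔾.unit_s hue, hek]
        have p3 : 𝔾.s e = 𝔾.r (𝔾.mul g₀ k p2) := by rw [𝔾.r_mul, 𝔾.unit_s hue, hedef]
        exact ⟨e, k, p1, p2, p3, hek, (𝔾.mul_unit_left hue p1).symm,
          (𝔾.mul_unit_left hue p3).symm⟩
      · rw [compA0 k bk hbk hek]
        exact hF0 e'
    -- F vanishes on (a_h δ_h) · (x · (b_k δ_k))
    have hFsxt1 : ∀ (h k : G) (ah bk : R), ah ∈ P.D h → bk ∈ P.D k → ∀ e',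
        F e' (P.skewMul (Finsupp.single h ah) (P.skewMul x (Finsupp.single k bk))) = 0 := by
      intro h k ah bk hah hbk e'
      by_cases hek : 𝔾.r k = e
      · obtain ⟨p2, heq, hm1, hm2⟩ := compA k bk hbk hek
        rw [heq, P.skewMul_sub_right (P.carrier_single hah) (P.carrier_single hm1)
          (P.carrier_single hm2), P.single_mul_single, P.single_mul_single]
        by_cases hsh : 𝔾.s h = 𝔾.r k
        · have c2 : 𝔾.s h = 𝔾.r (𝔾.mul g₀ k p2) := by rw [𝔾.r_mul, ← hedef, ← hek]; exact hsh
          rw [dif_pos hsh, dif_pos c2]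
          exact hpair e' _ _ _ ⟨h, k, hsh, p2, c2, hek, rfl, rfl⟩
        · have c2 : ¬ (𝔾.s h = 𝔾.r (𝔾.mul g₀ k p2)) := by
            rw [𝔾.r_mul, ← hedef, ← hek]; exact hsh
          rw [dif_neg hsh, dif_neg c2, sub_self]
          exact hF0 e'
      · rw [compA0 k bk hbk hek, P.skewMul_zero_right]
        exact hF0 e'
    -- F vanishes on all four kinds of generators with general carrier elements
    have hFsx : ∀ s ∈ P.carrier, ∀ e', F e' (P.skewMul s x) = 0 := by
      intro s hs e'
      have hrw : P.skewMul s x = ∑ h ∈ s.support,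
          P.skewMul (Finsupp.single h (s h)) x := by
        conv_lhs => rw [finsupp_eq_sum_single s]
        exact P.skewMul_sum_left (fun h _ => P.carrier_single (hs h)) hxc
      rw [hrw, hFsum]
      exact Finset.sum_eq_zero fun h _ => hFsx1 h (s h) (hs h) e'
    have hFxt : ∀ t ∈ P.carrier, ∀ e', F e' (P.skewMul x t) = 0 := by
      intro t ht e'
      have hrw : P.skewMul x t = ∑ k ∈ t.support,
          P.skewMul x (Finsupp.single k (t k)) := by
        conv_lhs => rw [finsupp_eq_sum_single t]
        exact P.skewMul_sum_right hxc (fun k _ => P.carrier_single (ht k))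
      rw [hrw, hFsum]
      exact Finset.sum_eq_zero fun k _ => hFxt1 k (t k) (ht k) e'
    have hFsxt : ∀ s ∈ P.carrier, ∀ t ∈ P.carrier, ∀ e',
        F e' (P.skewMul s (P.skewMul x t)) = 0 := by
      intro s hs t ht e'
      have hrw1 : P.skewMul x t = ∑ k ∈ t.support,
          P.skewMul x (Finsupp.single k (t k)) := by
        conv_lhs => rw [finsupp_eq_sum_single t]
        exact P.skewMul_sum_right hxc (fun k _ => P.carrier_single (ht k))
      have hmem : ∀ k ∈ t.support, P.skewMul x (Finsupp.single k (t k)) ∈ P.carrier :=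
        fun k _ => P.skewMul_mem_carrier hxc (P.carrier_single (ht k))
      rw [hrw1, P.skewMul_sum_right hs hmem, hFsum]
      refine Finset.sum_eq_zero fun k hk => ?_
      have hrw2 : P.skewMul s (P.skewMul x (Finsupp.single k (t k)))
          = ∑ h ∈ s.support, P.skewMul (Finsupp.single h (s h))
              (P.skewMul x (Finsupp.single k (t k))) := by
        conv_lhs => rw [finsupp_eq_sum_single s]
        exact P.skewMul_sum_left (fun h _ => P.carrier_single (hs h)) (hmem k hk)
      rw [hrw2, hFsum]
      exact Finset.sum_eq_zero fun h _ => hFsxt1 h k (s h) (t k) (hs h) (ht k) e'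
    -- the ideal generated by x
    set Gen : Set (G →₀ R) := {w | w = x ∨ (∃ s ∈ P.carrier, w = P.skewMul s x)
      ∨ (∃ t ∈ P.carrier, w = P.skewMul x t)
      ∨ ∃ s ∈ P.carrier, ∃ t ∈ P.carrier, w = P.skewMul s (P.skewMul x t)} with hGendef
    set T : AddSubgroup (G →₀ R) := AddSubgroup.closure Gen with hTdef
    have hGenC : ∀ w ∈ Gen, w ∈ P.carrier := by
      rintro w (rfl | ⟨s, hs, rfl⟩ | ⟨t, ht, rfl⟩ | ⟨s, hs, t, ht, rfl⟩)
      · exact hxc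
      · exact P.skewMul_mem_carrier hs hxc
      · exact P.skewMul_mem_carrier hxc ht
      · exact P.skewMul_mem_carrier hs (P.skewMul_mem_carrier hxc ht)
    have hTsub : ∀ z ∈ T, z ∈ P.carrier := by
      intro z hz
      induction hz using AddSubgroup.closure_induction with
      | mem w hw => exact hGenC w hw
      | zero => exact P.carrier_zero
      | add z z' _ _ ihz ihz' => exact P.carrier_add ihz ihz'
      | neg z _ ih => exact P.carrier_neg ih
    have hTmul : ∀ z ∈ T, ∀ y ∈ P.carrier,
        P.skewMul z y ∈ T ∧ P.skewMul y z ∈ T := by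
      intro z hz
      induction hz using AddSubgroup.closure_induction with
      | mem w hw =>
        intro y hy
        rcases hw with rfl | ⟨s, hs, rfl⟩ | ⟨t, ht, rfl⟩ | ⟨s, hs, t, ht, rfl⟩
        · exact ⟨AddSubgroup.subset_closure (Or.inr (Or.inr (Or.inl ⟨y, hy, rfl⟩))),
            AddSubgroup.subset_closure (Or.inr (Or.inl ⟨y, hy, rfl⟩))⟩
        · constructor
          · rw [P.skewMul_assoc hsu hs hxc hy]
            exact AddSubgroup.subset_closure (Or.inr (Or.inr (Or.inr ⟨s, hs, y, hy, rfl⟩)))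
          · rw [← P.skewMul_assoc hsu hy hs hxc]
            exact AddSubgroup.subset_closure
              (Or.inr (Or.inl ⟨_, P.skewMul_mem_carrier hy hs, rfl⟩))
        · constructor
          · rw [P.skewMul_assoc hsu hxc ht hy]
            exact AddSubgroup.subset_closure
              (Or.inr (Or.inr (Or.inl ⟨_, P.skewMul_mem_carrier ht hy, rfl⟩)))
          · exact AddSubgroup.subset_closure
              (Or.inr (Or.inr (Or.inr ⟨y, hy, t, ht, rfl⟩)))
        · have hxt : P.skewMul x t ∈ P.carrier := P.skewMul_mem_carrier hxc ht
          constructor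
          · rw [P.skewMul_assoc hsu hs hxt hy, P.skewMul_assoc hsu hxc ht hy]
            exact AddSubgroup.subset_closure (Or.inr (Or.inr (Or.inr
              ⟨s, hs, _, P.skewMul_mem_carrier ht hy, rfl⟩)))
          · rw [← P.skewMul_assoc hsu hy hs hxt]
            exact AddSubgroup.subset_closure (Or.inr (Or.inr (Or.inr
              ⟨_, P.skewMul_mem_carrier hy hs, t, ht, rfl⟩)))
      | zero =>
        intro y hy
        rw [P.skewMul_zero_left, P.skewMul_zero_right]
        exact ⟨T.zero_mem, T.zero_mem⟩
      | add z z' hz hz' ihz ihz' =>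
        intro y hy
        have hzc : z ∈ P.carrier := hTsub z hz
        have hzc' : z' ∈ P.carrier := hTsub z' hz'
        rw [P.skewMul_add_left hzc hzc' hy, P.skewMul_add_right hy hzc hzc']
        exact ⟨T.add_mem (ihz y hy).1 (ihz' y hy).1, T.add_mem (ihz y hy).2 (ihz' y hy).2⟩
      | neg z hz ih =>
        intro y hy
        have hzc : z ∈ P.carrier := hTsub z hz
        rw [P.skewMul_neg_left hzc hy, P.skewMul_neg_right hy hzc]
        exact ⟨T.neg_mem (ih y hy).1, T.neg_mem (ih y hy).2⟩
    have hTF : ∀ z ∈ T, ∀ e', F e' z = 0 := by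
      intro z hz
      induction hz using AddSubgroup.closure_induction with
      | mem w hw =>
        rcases hw with rfl | ⟨s, hs, rfl⟩ | ⟨t, ht, rfl⟩ | ⟨s, hs, t, ht, rfl⟩
        · exact hFx
        · exact hFsx s hs
        · exact hFxt t ht
        · exact hFsxt s hs t ht
      | zero => exact hF0
      | add z z' _ _ ihz ihz' => intro e'; rw [hFadd, ihz e', ihz' e', add_zero]
      | neg z _ ih => intro e'; rw [hFneg, ih e', neg_zero]
    have hTideal : P.IsSkewIdeal (T : Set (G →₀ R)) := by
      refine ⟨fun z hz => hTsub z hz, T.zero_mem, fun a ha b hb => T.add_mem ha hb,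
        fun a ha => T.neg_mem ha, fun a ha y hy => ?_⟩
      obtain ⟨h1, h2⟩ := hTmul a ha y hy
      exact ⟨h1, h2⟩
    have hTne : (T : Set (G →₀ R)) ≠ {0} := by
      intro hEq
      have hxT : x ∈ (T : Set (G →₀ R)) := AddSubgroup.subset_closure (Or.inl rfl)
      rw [hEq] at hxT
      exact hxne (Set.mem_singleton_iff.mp hxT)
    apply hip (T : Set (G →₀ R)) hTideal hTne
    -- show T ∩ diag = {0}
    refine Set.eq_singleton_iff_unique_mem.mpr ⟨⟨T.zero_mem, P.zero_mem_diag⟩, ?_⟩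
    rintro z ⟨hzT, hzd⟩
    have hz0 : ∀ g, z g = 0 := by
      intro g
      by_cases hu : 𝔾.unit g
      · have hF := hTF z hzT g
        have hFz : F g z = z g := by
          have hcongr : ∀ m ∈ z.support, (if Eqv m g then z m else 0)
              = (if m = g then z m else 0) := by
            intro m hm
            have hiff : Eqv m g ↔ m = g := by
              constructor
              · intro h'
                exact hEqv_unit m g (hzd.2 m hm) hu h'
              · rintro rfl
                exact Relation.EqvGen.refl m
            rw [if_congr hiff rfl rfl]
          rw [show F g z = ∑ m ∈ z.support, if Eqv m g then z m else 0 from rfl,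
            Finset.sum_congr rfl hcongr, Finset.sum_ite_eq' z.support g (fun m => z m)]
          split
          · rfl
          · next hmem => exact (Finsupp.notMem_support_iff.mp hmem).symm
        rw [← hFz]
        exact hF
      · exact Finsupp.notMem_support_iff.mp fun hmem => hu (hzd.2 g hmem)
    exact Finsupp.ext hz0

end PartialAction
/-- **Statement 9.** Suppose `R` is commutative.  Then `⊕_{e ∈ G₀} D_e δ_e` is a
maximal commutative subring of `R ⋊_α G` if, and only if, `α` has the intersection
property. -/
theorem maxCommDiag_iff_intersectionProperty {G R : Type*} [NonUnitalCommRing R]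
    (𝔾 : DGroupoid G) (P : PartialAction 𝔾 R)
    (hsu : ∀ g, IsSUnitalSet (P.D g)) (hds : P.directSum) :
    P.IsMaxCommDiag ↔ P.HasIntersectionProperty := by
  exact ⟨fun h => P.maxComm_to_intersection hsu h, fun h => P.intersection_to_maxComm hsu h⟩
end

section
/- Let 𝒢 be an ultragraph. Then every loop in 𝒢 is recurrent if, and only if, 𝒢 satisfies Condition (K). -/
/-- An ultragraph `𝒢 = (G⁰, 𝒢¹, r, s)`: countable sets of vertices and edges, a source
map `src : 𝒢¹ → G⁰` and a range map `rng : 𝒢¹ → 𝒫(G⁰) \ {∅}`. -/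
structure Ultragraph where
  V : Type
  E : Type
  countV : Countable V
  countE : Countable E
  src : E → V
  rng : E → Set V
  rng_nonempty : ∀ e, (rng e).Nonempty

namespace Ultragraph

variable (U : Ultragraph)

/-- Consecutive edges of the list are composable: `s(α_{i+1}) ∈ r(α_i)`. -/
def Chain (l : List U.E) : Prop :=
  ∀ i : ℕ, ∀ h : i + 1 < l.length,
    U.src (l.get ⟨i + 1, h⟩) ∈ U.rng (l.get ⟨i, Nat.lt_of_succ_lt h⟩)

/-- A (finite) path of length `≥ 1` in the ultragraph. -/
def IsPath (l : List U.E) : Prop := l ≠ [] ∧ U.Chain l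

/-- A loop: a path `α` with `s(α) ∈ r(α_n)`. -/
def IsLoop (l : List U.E) : Prop :=
  U.IsPath l ∧ ∃ h : l ≠ [], U.src (l.head h) ∈ U.rng (l.getLast h)

/-- A loop based at the vertex `v`. -/
def IsLoopBasedAt (l : List U.E) (v : U.V) : Prop :=
  U.IsLoop l ∧ ∃ h : l ≠ [], U.src (l.head h) = v

/-- A simple loop based at `v`: `s(α_i) ≠ s(α_1) = v` for all `i ≠ 1`. -/
def IsSimpleLoopBasedAt (l : List U.E) (v : U.V) : Prop :=
  U.IsLoopBasedAt l v ∧ ∀ i : ℕ, ∀ h : i < l.length, i ≠ 0 → U.src (l.get ⟨i, h⟩) ≠ v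

/-- The periodic infinite path `γ^∞ = γγγ⋯`, as an infinite sequence of edges. -/
def perInf (l : List U.E) (h : l ≠ []) : ℕ → U.E :=
  fun n => l.get ⟨n % l.length, Nat.mod_lt _ (List.length_pos_iff.mpr h)⟩

/-- Prefix a finite word to an infinite word of edges. -/
def appendInf (l : List U.E) (f : ℕ → U.E) : ℕ → U.E :=
  fun n => if h : n < l.length then l.get ⟨n, h⟩ else f (n - l.length)

/-- A loop `γ` is recurrent: there is a loop `ρ` with `s(ρ) = s(γ)` and
`γργ^∞ ≠ γ^∞` (as infinite sequences of edges). -/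
def IsRecurrent (γ : List U.E) : Prop :=
  U.IsLoop γ ∧ ∃ ρ : List U.E, U.IsLoop ρ ∧ ∃ (hγ : γ ≠ []) (hρ : ρ ≠ []),
    U.src (ρ.head hρ) = U.src (γ.head hγ) ∧
    U.appendInf (γ ++ ρ) (U.perInf γ hγ) ≠ U.perInf γ hγ

/-- Condition (K): every vertex has either no simple loop based at it, or at least two
distinct simple loops based at it. -/
def ConditionK : Prop :=
  ∀ v : U.V, (∀ l : List U.E, ¬ U.IsSimpleLoopBasedAt l v) ∨
    ∃ l₁ l₂ : List U.E, U.IsSimpleLoopBasedAt l₁ v ∧ U.IsSimpleLoopBasedAt l₂ v ∧ l₁ ≠ l₂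

end Ultragraph

namespace Ultragraph

variable (U : Ultragraph)

lemma appendInf_lt (l : List U.E) (f : ℕ → U.E) {n : ℕ} (h : n < l.length) :
    U.appendInf l f n = l[n] := by simp [appendInf, h]

lemma appendInf_add (l : List U.E) (f : ℕ → U.E) (n : ℕ) :
    U.appendInf l f (l.length + n) = f n := by
  simp [appendInf]

lemma perInf_eq (l : List U.E) (h : l ≠ []) (n : ℕ) :
    U.perInf l h n = l[n % l.length]'(Nat.mod_lt _ (List.length_pos_iff.mpr h)) := rfl

lemma appendInf_append (a b : List U.E) (f : ℕ → U.E) :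
    U.appendInf (a ++ b) f = U.appendInf a (U.appendInf b f) := by
  funext n
  simp only [appendInf, List.length_append, List.get_eq_getElem]
  by_cases h1 : n < a.length
  · rw [dif_pos (by omega), dif_pos h1, List.getElem_append_left h1]
  · rw [dif_neg h1]
    by_cases h2 : n < a.length + b.length
    · rw [dif_pos h2, dif_pos (by omega), List.getElem_append_right (by omega)]
    · rw [dif_neg h2, dif_neg (by omega)]
      congr 1; omega

lemma appendInf_perInf (l : List U.E) (h : l ≠ []) :
    U.appendInf l (U.perInf l h) = U.perInf l h := by
  funext n
  by_cases hn : n < l.length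
  · rw [U.appendInf_lt _ _ hn, U.perInf_eq]
    congr 1
    exact (Nat.mod_eq_of_lt hn).symm
  · simp only [appendInf, dif_neg hn, perInf_eq]
    congr 1
    exact (Nat.mod_eq_sub_mod (le_of_not_gt hn)).symm

lemma appendInf_cancel {l : List U.E} {f g : ℕ → U.E}
    (h : U.appendInf l f = U.appendInf l g) : f = g := by
  funext n
  have := congrFun h (l.length + n)
  rwa [U.appendInf_add, U.appendInf_add] at this

lemma extract (l : List U.E) (v : U.V) (h : U.IsLoopBasedAt l v) :
    ∃ p q : List U.E, l = p ++ q ∧ U.IsSimpleLoopBasedAt p v ∧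
      (q = [] ∨ U.IsLoopBasedAt q v) := by
  classical
  obtain ⟨⟨⟨hne, hch⟩, hl1, hlast⟩, hl2, hhead⟩ := h
  have hlen : 0 < l.length := List.length_pos_iff.mpr hne
  by_cases hS : ∃ i, 0 < i ∧ ∃ hh : i < l.length, U.src (l.get ⟨i, hh⟩) = v
  · set i := Nat.find hS with hi_def
    obtain ⟨hipos, hilt, hiv⟩ := Nat.find_spec hS
    refine ⟨l.take i, l.drop i, (List.take_append_drop i l).symm, ?_, Or.inr ?_⟩
    · have htlen : (l.take i).length = i := by simp; omega
      have htne : l.take i ≠ [] := by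
        intro hc; rw [← List.length_eq_zero_iff] at hc; omega
      refine ⟨⟨⟨⟨htne, ?_⟩, htne, ?_⟩, htne, ?_⟩, ?_⟩
      · intro j hj
        simp only [List.get_eq_getElem, List.getElem_take]
        exact hch j (by rw [htlen] at hj; omega)
      · rw [List.head_eq_getElem, List.getLast_eq_getElem]
        simp only [List.getElem_take, htlen]
        have h0 : U.src (l[0]'hlen) = v := by
          rw [← List.head_eq_getElem hne]; exact hhead
        rw [h0, ← hiv]
        have := hch (i - 1) (by omega)
        simp only [List.get_eq_getElem] at this ⊢
        convert this using 3 <;> omega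
      · rw [List.head_eq_getElem]
        simp only [List.getElem_take]
        rw [← List.head_eq_getElem hne]; exact hhead
      · intro j hj hj0
        simp only [List.get_eq_getElem, List.getElem_take]
        rw [htlen] at hj
        intro hc
        exact Nat.find_min hS hj ⟨Nat.pos_of_ne_zero hj0, by omega, hc⟩
    · have hdne : l.drop i ≠ [] := by
        intro hc; rw [← List.length_eq_zero_iff] at hc; simp at hc; omega
      have hdlen : (l.drop i).length = l.length - i := by simp
      refine ⟨⟨⟨hdne, ?_⟩, hdne, ?_⟩, hdne, ?_⟩
      · intro j hj
        simp only [List.get_eq_getElem, List.getElem_drop]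
        have := hch (i + j) (by rw [hdlen] at hj; omega)
        simp only [List.get_eq_getElem] at this
        convert this using 3 <;> omega
      · rw [List.head_eq_getElem, List.getLast_eq_getElem]
        simp only [List.getElem_drop]
        have h1 : U.src (l[i + 0]'(by omega)) = v := by
          simp only [Nat.add_zero]; simpa using hiv
        rw [h1]
        have h2 : v ∈ U.rng (l.getLast hne) := by rw [← hhead]; exact hlast
        rw [List.getLast_eq_getElem] at h2
        convert h2 using 3
        rw [hdlen]; omega
      · rw [List.head_eq_getElem]
        simp only [List.getElem_drop]
        simpa using hiv
  · push_neg at hS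
    refine ⟨l, [], by simp, ⟨⟨⟨⟨hne, hch⟩, hne, hlast⟩, hne, hhead⟩, ?_⟩, Or.inl rfl⟩
    intro j hj hj0 hc
    exact absurd hc (hS j (Nat.pos_of_ne_zero hj0) hj)

lemma loop_pow (v : U.V) (l0 : List U.E) (h0 : l0 ≠ [])
    (huniq : ∀ l, U.IsSimpleLoopBasedAt l v → l = l0) :
    ∀ ρ, U.IsLoopBasedAt ρ v → U.appendInf ρ (U.perInf l0 h0) = U.perInf l0 h0 := by
  have main : ∀ n ρ, ρ.length ≤ n → U.IsLoopBasedAt ρ v →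
      U.appendInf ρ (U.perInf l0 h0) = U.perInf l0 h0 := by
    intro n
    induction n with
    | zero =>
      intro ρ hlen hρ
      have := List.length_pos_iff.mpr hρ.1.1.1
      omega
    | succ n ih =>
      intro ρ hlen hρ
      obtain ⟨p, q, rfl, hp, hq⟩ := U.extract _ v hρ
      have hpl0 : p = l0 := huniq p hp
      have hpne : p ≠ [] := hp.1.1.1.1
      rcases hq with rfl | hq
      · rw [List.append_nil, hpl0, U.appendInf_perInf]
      · have hql : q.length ≤ n := by
          have := List.length_pos_iff.mpr hpne
          rw [List.length_append] at hlen; omega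
        rw [U.appendInf_append, ih q hql hq, hpl0, U.appendInf_perInf]
  exact fun ρ hρ => main ρ.length ρ le_rfl hρ

end Ultragraph


/-- **Statement 19.** Every loop in the ultragraph `𝒢` is recurrent if, and only if,
`𝒢` satisfies Condition (K). -/
theorem every_loop_recurrent_iff_conditionK (U : Ultragraph) :
    (∀ γ : List U.E, U.IsLoop γ → U.IsRecurrent γ) ↔ U.ConditionK := by
  constructor
  · -- every loop recurrent → Condition (K)
    intro hrec v
    by_cases hex : ∃ l, U.IsSimpleLoopBasedAt l v
    · obtain ⟨l, hl⟩ := hex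
      right
      by_contra hcon
      push_neg at hcon
      have huniq : ∀ l', U.IsSimpleLoopBasedAt l' v → l' = l := by
        intro l' hl'
        by_contra hne'
        exact hne' (hcon l' l hl' hl)
      obtain ⟨_, ρ, hρloop, hγne, hρne, hsrc, hneq⟩ := hrec l hl.1.1
      apply hneq
      have hvγ : U.src (l.head hγne) = v := hl.1.2.choose_spec
      have hρbased : U.IsLoopBasedAt ρ v := ⟨hρloop, hρne, by rw [hsrc]; exact hvγ⟩
      rw [U.appendInf_append, U.loop_pow v l hγne huniq ρ hρbased, U.appendInf_perInf]
    · left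
      push_neg at hex
      exact hex
  · -- Condition (K) → every loop recurrent
    intro hK γ hγ
    have hne : γ ≠ [] := hγ.1.1
    set v := U.src (γ.head hne) with hv
    have hbased : U.IsLoopBasedAt γ v := ⟨hγ, hne, rfl⟩
    obtain ⟨p, q, _, hp, _⟩ := U.extract γ v hbased
    rcases hK v with hno | ⟨l₁, l₂, h₁, h₂, hne12⟩
    · exact absurd hp (hno p)
    refine ⟨hγ, ?_⟩
    have hglen : 0 < γ.length := List.length_pos_iff.mpr hne
    -- facts derived from an (assumed) equality γ l γ^∞ = γ^∞
    have key : ∀ l : List U.E,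
        U.appendInf (γ ++ l) (U.perInf γ hne) = U.perInf γ hne →
        (∀ j : ℕ, ∀ hj : j < l.length, l[j] = U.perInf γ hne j) ∧
        (∀ n, U.perInf γ hne (n + l.length) = U.perInf γ hne n) := by
      intro l heq
      rw [U.appendInf_append] at heq
      have heq' : U.appendInf l (U.perInf γ hne) = U.perInf γ hne := by
        apply U.appendInf_cancel (l := γ)
        rw [heq, U.appendInf_perInf]
      constructor
      · intro j hj
        have := congrFun heq' j
        rwa [U.appendInf_lt _ _ hj] at this
      · intro n
        have := congrFun heq' (l.length + n)
        rw [U.appendInf_add] at this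
        rw [add_comm, ← this]
    -- if both l₁ and l₂ give equality, they are equal: contradiction
    have aux : ∀ la lb : List U.E, U.IsSimpleLoopBasedAt la v → U.IsSimpleLoopBasedAt lb v →
        U.appendInf (γ ++ la) (U.perInf γ hne) = U.perInf γ hne →
        U.appendInf (γ ++ lb) (U.perInf γ hne) = U.perInf γ hne →
        la.length < lb.length → False := by
      intro la lb ha hb ea eb hlt
      have hane : la ≠ [] := ha.1.1.1.1
      have halen : 0 < la.length := List.length_pos_iff.mpr hane
      have hbv : U.src (lb[la.length]'hlt) = v := by
        rw [(key lb eb).1 la.length hlt]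
        have h1 : U.perInf γ hne la.length = U.perInf γ hne 0 := by
          have := (key la ea).2 0
          simpa using this
        rw [h1, U.perInf_eq]
        simp only [Nat.zero_mod]
        rw [← List.head_eq_getElem hne]
      have := hb.2 la.length hlt (by omega)
      simp only [List.get_eq_getElem] at this
      exact this hbv
    have main : U.appendInf (γ ++ l₁) (U.perInf γ hne) ≠ U.perInf γ hne ∨
        U.appendInf (γ ++ l₂) (U.perInf γ hne) ≠ U.perInf γ hne := by
      by_contra hc
      push_neg at hc
      obtain ⟨e₁, e₂⟩ := hc
      rcases lt_trichotomy l₁.length l₂.length with h | h | h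
      · exact aux l₁ l₂ h₁ h₂ e₁ e₂ h
      · apply hne12
        apply List.ext_getElem h
        intro j hj1 hj2
        rw [(key l₁ e₁).1 j hj1, (key l₂ e₂).1 j hj2]
      · exact aux l₂ l₁ h₂ h₁ e₂ e₁ h
    have use : ∀ l : List U.E, U.IsSimpleLoopBasedAt l v →
        U.appendInf (γ ++ l) (U.perInf γ hne) ≠ U.perInf γ hne →
        ∃ ρ : List U.E, U.IsLoop ρ ∧ ∃ (hγ' : γ ≠ []) (hρ : ρ ≠ []),
          U.src (ρ.head hρ) = U.src (γ.head hγ') ∧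
          U.appendInf (γ ++ ρ) (U.perInf γ hγ') ≠ U.perInf γ hγ' := by
      intro l hl hneq
      have hlne : l ≠ [] := hl.1.1.1.1
      refine ⟨l, hl.1.1, hne, hlne, ?_, hneq⟩
      rw [← hv]
      exact hl.1.2.choose_spec
    rcases main with h | h
    · exact use l₁ h₁ h
    · exact use l₂ h₂ h
end
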